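/- For the polytope Δ = conv{(2,1,−2), (2,0,1), (2,2,1), (−4,−2,1)}, the facet Δ_can contained in the plane {x₁ = 2} has exactly 2 interior lattice points (relative to that facet), and all other facets of Δ have integral distance 1 to the origin while Δ_can has integral distance 2. -/

import Mathlib

noncomputable section

def pairing {n : ℕ} (x : Fin n → ℝ) (ν : Fin n → ℤ) : ℝ := ∑ i, x i * (ν i : ℝ)

def IsLatticePoint {n : ℕ} (x : Fin n → ℝ) : Prop := ∀ i, ∃ z : ℤ, x i = (z : ℝ)

def IsPrimitiveZ {n : ℕ} (v : Fin n → ℤ) : Prop := Finset.univ.gcd v = 1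

/-- The polytope `Δ = conv{(2,1,−2), (2,0,1), (2,2,1), (−4,−2,1)} ⊂ ℝ³`. -/
def Δa : Set (Fin 3 → ℝ) :=
  convexHull ℝ {![2, 1, -2], ![2, 0, 1], ![2, 2, 1], ![-4, -2, 1]}

/-- The facet `Δ_can`, i.e. the part of `Δ` lying in the plane `{x₁ = 2}`. -/
def Δcan : Set (Fin 3 → ℝ) := Δa ∩ { x | x 0 = 2 }

/-- `(n, l)` cuts out a facet of `Δ`: the halfspace `⟨x,n⟩ ≥ l` contains `Δ`
and the hyperplane `⟨x,n⟩ = l` meets `Δ` in a 2-dimensional set (it contains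
three affinely independent points of `Δ`). -/
def IsFacetData (Δ : Set (Fin 3 → ℝ)) (n : Fin 3 → ℤ) (l : ℤ) : Prop :=
  (∀ x ∈ Δ, (l : ℝ) ≤ pairing x n) ∧
  ∃ u v w : Fin 3 → ℝ, u ∈ Δ ∧ v ∈ Δ ∧ w ∈ Δ ∧
    pairing u n = l ∧ pairing v n = l ∧ pairing w n = l ∧
    AffineIndependent ℝ ![u, v, w]

/-! ### Auxiliary material -/

open Set Finset Module

def VA : Fin 3 → ℝ := ![2, 1, -2]
def VB : Fin 3 → ℝ := ![2, 0, 1]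
def VC : Fin 3 → ℝ := ![2, 2, 1]
def VD : Fin 3 → ℝ := ![-4, -2, 1]

lemma Δa_def : Δa = convexHull ℝ ({VA, VB, VC, VD} : Set (Fin 3 → ℝ)) := rfl

/- generic convex hull weight lemmas -/

lemma hull_mem_fin {E : Type*} [AddCommGroup E] [Module ℝ E] {m : ℕ} (V : Fin m → E) {x : E}
    (hx : x ∈ convexHull ℝ (Set.range V)) :
    ∃ w : Fin m → ℝ, (∀ i, 0 ≤ w i) ∧ ∑ i, w i = 1 ∧ ∑ i, w i • V i = x := by
  classical
  rw [mem_convexHull_iff_exists_fintype] at hx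
  obtain ⟨ι, _, w, z, hw0, hw1, hz, hxx⟩ := hx
  choose g hg using fun i => Set.mem_range.mp (hz i)
  refine ⟨fun k => ∑ i ∈ Finset.univ.filter (fun i => g i = k), w i, ?_, ?_, ?_⟩
  · intro k; exact Finset.sum_nonneg fun i _ => hw0 i
  · rw [Finset.sum_fiberwise]; exact hw1
  · rw [← hxx, ← Finset.sum_fiberwise (Finset.univ) g (fun i => w i • z i)]
    refine Finset.sum_congr rfl fun k _ => ?_
    rw [Finset.sum_smul]
    refine Finset.sum_congr rfl fun i hi => ?_
    rw [Finset.mem_filter] at hi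
    rw [← hi.2, hg]

lemma range4_eq {α : Type*} (a b c d : α) : Set.range ![a, b, c, d] = {a, b, c, d} := by
  simp only [Matrix.range_cons, Matrix.range_empty, Set.union_empty, Set.union_singleton,
    Set.singleton_union]
  ext x; simp; tauto

lemma range3_eq {α : Type*} (a b c : α) : Set.range ![a, b, c] = {a, b, c} := by
  simp only [Matrix.range_cons, Matrix.range_empty, Set.union_empty, Set.union_singleton,
    Set.singleton_union]
  ext x; simp; tauto

lemma hull4_weights {a b c d x : Fin 3 → ℝ}
    (hx : x ∈ convexHull ℝ ({a, b, c, d} : Set (Fin 3 → ℝ))) :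
    ∃ w : Fin 4 → ℝ, (∀ i, 0 ≤ w i) ∧ w 0 + w 1 + w 2 + w 3 = 1 ∧
      w 0 • a + w 1 • b + w 2 • c + w 3 • d = x := by
  rw [← range4_eq] at hx
  obtain ⟨w, hw0, hw1, hw2⟩ := hull_mem_fin _ hx
  refine ⟨w, hw0, ?_, ?_⟩
  · rw [← hw1, Fin.sum_univ_four]
  · rw [← hw2, Fin.sum_univ_four]
    simp [Matrix.cons_val_zero, Matrix.cons_val_one]

lemma hull3_mk {E : Type*} [AddCommGroup E] [Module ℝ E] {a b c x : E} (w : Fin 3 → ℝ)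
    (hw0 : ∀ i, 0 ≤ w i) (hw1 : w 0 + w 1 + w 2 = 1)
    (hw2 : w 0 • a + w 1 • b + w 2 • c = x) :
    x ∈ convexHull ℝ ({a, b, c} : Set E) := by
  refine mem_convexHull_of_exists_fintype w ![a, b, c] hw0
    (by rw [Fin.sum_univ_three]; exact hw1) ?_ ?_
  · intro i; fin_cases i <;> simp
  · rw [Fin.sum_univ_three]; simpa using hw2

lemma hull2_mk {E : Type*} [AddCommGroup E] [Module ℝ E] {a b x : E} (w : Fin 2 → ℝ)
    (hw0 : ∀ i, 0 ≤ w i) (hw1 : w 0 + w 1 = 1) (hw2 : w 0 • a + w 1 • b = x) :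
    x ∈ convexHull ℝ ({a, b} : Set E) := by
  refine mem_convexHull_of_exists_fintype w ![a, b] hw0
    (by rw [Fin.sum_univ_two]; exact hw1) ?_ ?_
  · intro i; fin_cases i <;> simp
  · rw [Fin.sum_univ_two]; simpa using hw2

lemma pairing4 {a b c d : Fin 3 → ℝ} (w : Fin 4 → ℝ) (ν : Fin 3 → ℤ) :
    pairing (w 0 • a + w 1 • b + w 2 • c + w 3 • d) ν =
      w 0 * pairing a ν + w 1 * pairing b ν + w 2 * pairing c ν + w 3 * pairing d ν := by
  simp only [pairing, Pi.add_apply, Pi.smul_apply, smul_eq_mul, Finset.mul_sum,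
    ← Finset.sum_add_distrib]
  exact Finset.sum_congr rfl fun i _ => by ring

lemma eq_zero_of_support {l : ℝ} {w p : Fin 4 → ℝ} (hw0 : ∀ i, 0 ≤ w i)
    (hw1 : ∑ i, w i = 1) (hp : ∀ i, l ≤ p i) (heq : ∑ i, w i * p i = l) :
    ∀ i, l < p i → w i = 0 := by
  have hzero : ∑ i, w i * (p i - l) = 0 := by
    have h : ∑ i, w i * (p i - l) = (∑ i, w i * p i) - (∑ i, w i) * l := by
      rw [Finset.sum_mul, ← Finset.sum_sub_distrib]
      exact Finset.sum_congr rfl fun i _ => by ring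
    rw [h, heq, hw1]; ring
  have hterm : ∀ i ∈ Finset.univ, w i * (p i - l) = 0 :=
    (Finset.sum_eq_zero_iff_of_nonneg
      (fun i _ => mul_nonneg (hw0 i) (by linarith [hp i]))).mp hzero
  intro i hi
  rcases mul_eq_zero.mp (hterm i (Finset.mem_univ i)) with h | h
  · exact h
  · linarith

lemma not_affInd_of_pair {E : Type*} [NormedAddCommGroup E] [NormedSpace ℝ E]
    [FiniteDimensional ℝ E]
    {c d u v w : E} (hu : u ∈ convexHull ℝ ({c, d} : Set E))
    (hv : v ∈ convexHull ℝ ({c, d} : Set E)) (hw : w ∈ convexHull ℝ ({c, d} : Set E)) :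
    ¬ AffineIndependent ℝ ![u, v, w] := by
  intro hind
  have hrank : finrank ℝ (vectorSpan ℝ (Set.range ![u, v, w])) = 2 :=
    hind.finrank_vectorSpan (by simp : Fintype.card (Fin 3) = 2 + 1)
  have h1 : convexHull ℝ ({c, d} : Set E) ⊆ (affineSpan ℝ ({c, d} : Set E) : Set E) :=
    convexHull_subset_affineSpan _
  have hsub : Set.range ![u, v, w] ⊆ (affineSpan ℝ ({c, d} : Set E) : Set E) := by
    rw [range3_eq]
    rintro x (rfl | rfl | rfl)
    exacts [h1 hu, h1 hv, h1 hw]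
  have hle : vectorSpan ℝ (Set.range ![u, v, w]) ≤
      (affineSpan ℝ ({c, d} : Set E)).direction := by
    rw [direction_affineSpan]
    calc vectorSpan ℝ (Set.range ![u, v, w])
        ≤ vectorSpan ℝ (affineSpan ℝ ({c, d} : Set E) : Set E) := vectorSpan_mono ℝ hsub
      _ = _ := by
          rw [← direction_affineSpan, (affineSpan ℝ _).affineSpan_coe, direction_affineSpan]
  have hfr : finrank ℝ ((affineSpan ℝ ({c, d} : Set E)).direction) ≤ 1 := by
    rw [direction_affineSpan, vectorSpan_pair]
    have h2 : (Submodule.span ℝ {c -ᵥ d} : Submodule ℝ E) =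
        Submodule.span ℝ ({c -ᵥ d} : Set E) := rfl
    rw [h2]
    exact (finrank_span_le_card ({c -ᵥ d} : Set E)).trans (by simp)
  have := Submodule.finrank_mono hle
  omega

lemma two_pos_contra (ν : Fin 3 → ℤ) (l : ℝ) (A B C D : Fin 3 → ℝ)
    (hsupp : ∀ x ∈ convexHull ℝ ({A, B, C, D} : Set (Fin 3 → ℝ)), l ≤ pairing x ν)
    (hA : l < pairing A ν) (hB : l < pairing B ν)
    {u v w : Fin 3 → ℝ}
    (hu : u ∈ convexHull ℝ ({A, B, C, D} : Set (Fin 3 → ℝ)))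
    (hv : v ∈ convexHull ℝ ({A, B, C, D} : Set (Fin 3 → ℝ)))
    (hw : w ∈ convexHull ℝ ({A, B, C, D} : Set (Fin 3 → ℝ)))
    (hpu : pairing u ν = l) (hpv : pairing v ν = l) (hpw : pairing w ν = l)
    (hind : AffineIndependent ℝ ![u, v, w]) : False := by
  have key : ∀ x ∈ convexHull ℝ ({A, B, C, D} : Set (Fin 3 → ℝ)), pairing x ν = l →
      x ∈ convexHull ℝ ({C, D} : Set (Fin 3 → ℝ)) := by
    intro x hx hxl
    obtain ⟨W, hW0, hW1, hW2⟩ := hull4_weights hx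
    set p : Fin 4 → ℝ := ![pairing A ν, pairing B ν, pairing C ν, pairing D ν] with hp_def
    have hp : ∀ i, l ≤ p i := by
      intro i; fin_cases i <;> simp only [hp_def] <;> simp <;>
        [exact hsupp A (subset_convexHull ℝ _ (by simp));
         exact hsupp B (subset_convexHull ℝ _ (by simp));
         exact hsupp C (subset_convexHull ℝ _ (by simp));
         exact hsupp D (subset_convexHull ℝ _ (by simp))]
    have heq : ∑ i, W i * p i = l := by
      rw [Fin.sum_univ_four]
      have e0 : p 0 = pairing A ν := rfl
      have e1 : p 1 = pairing B ν := rfl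
      have e2 : p 2 = pairing C ν := rfl
      have e3 : p 3 = pairing D ν := rfl
      rw [e0, e1, e2, e3, ← pairing4 W ν, hW2, hxl]
    have hz := eq_zero_of_support hW0 (by rw [Fin.sum_univ_four]; exact hW1) hp heq
    have h0 : W 0 = 0 := hz 0 (by simpa [hp_def] using hA)
    have h1 : W 1 = 0 := hz 1 (by simpa [hp_def] using hB)
    refine hull2_mk ![W 2, W 3] (by intro i; fin_cases i <;> simp [hW0 2, hW0 3]) ?_ ?_
    · simp; linarith [hW1]
    · simp only [Matrix.cons_val_zero, Matrix.cons_val_one, Matrix.head_cons]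
      rw [← hW2, h0, h1]; simp
  exact not_affInd_of_pair (key u hu hpu) (key v hv hpv) (key w hw hpw) hind

/- pairing evaluations at the vertices -/

lemma pvA (ν : Fin 3 → ℤ) : pairing VA ν = 2*(ν 0 : ℝ) + (ν 1 : ℝ) - 2*(ν 2 : ℝ) := by
  simp [pairing, VA, Fin.sum_univ_three]; ring

lemma pvB (ν : Fin 3 → ℤ) : pairing VB ν = 2*(ν 0 : ℝ) + (ν 2 : ℝ) := by
  simp [pairing, VB, Fin.sum_univ_three]

lemma pvC (ν : Fin 3 → ℤ) : pairing VC ν = 2*(ν 0 : ℝ) + 2*(ν 1 : ℝ) + (ν 2 : ℝ) := by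
  simp [pairing, VC, Fin.sum_univ_three]

lemma pvD (ν : Fin 3 → ℤ) : pairing VD ν = -4*(ν 0 : ℝ) - 2*(ν 1 : ℝ) + (ν 2 : ℝ) := by
  simp [pairing, VD, Fin.sum_univ_three]; ring

set_option maxHeartbeats 2000000 in
lemma part2 (ν : Fin 3 → ℤ) (l : ℤ) (hprim : IsPrimitiveZ ν) (hfd : IsFacetData Δa ν l) :
    ((Δa ∩ { x | pairing x ν = (l : ℝ) } = Δcan → l.natAbs = 2) ∧
     (Δa ∩ { x | pairing x ν = (l : ℝ) } ≠ Δcan → l.natAbs = 1)) := by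
  obtain ⟨hsupp, u, v, w, hu, hv, hw, hpu, hpv, hpw, hind⟩ := hfd
  have hp : Finset.univ.gcd ν = 1 := hprim
  have hVA : VA ∈ Δa := subset_convexHull ℝ _ (by simp : VA ∈ ({VA,VB,VC,VD} : Set _))
  have hVB : VB ∈ Δa := subset_convexHull ℝ _ (by simp : VB ∈ ({VA,VB,VC,VD} : Set _))
  have hVC : VC ∈ Δa := subset_convexHull ℝ _ (by simp : VC ∈ ({VA,VB,VC,VD} : Set _))
  have hVD : VD ∈ Δa := subset_convexHull ℝ _ (by simp : VD ∈ ({VA,VB,VC,VD} : Set _))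
  have lA : (l : ℝ) ≤ pairing VA ν := hsupp VA hVA
  have lB : (l : ℝ) ≤ pairing VB ν := hsupp VB hVB
  have lC : (l : ℝ) ≤ pairing VC ν := hsupp VC hVC
  have lD : (l : ℝ) ≤ pairing VD ν := hsupp VD hVD
  have contra : ∀ A B C D : Fin 3 → ℝ,
      ({A, B, C, D} : Set (Fin 3 → ℝ)) = {VA, VB, VC, VD} →
      (l : ℝ) < pairing A ν → (l : ℝ) < pairing B ν → False := by
    intro A B C D hset hA hB
    refine two_pos_contra ν l A B C D ?_ hA hB ?_ ?_ ?_ hpu hpv hpw hind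
    · rw [hset]; exact hsupp
    · rw [hset]; exact hu
    · rw [hset]; exact hv
    · rw [hset]; exact hw
  have qA : (l : ℝ) < pairing VA ν ∨ l = 2*ν 0 + ν 1 - 2*ν 2 := by
    rcases lA.lt_or_eq with h | h
    · exact Or.inl h
    · right; rw [pvA ν] at h; exact_mod_cast h
  have qB : (l : ℝ) < pairing VB ν ∨ l = 2*ν 0 + ν 2 := by
    rcases lB.lt_or_eq with h | h
    · exact Or.inl h
    · right; rw [pvB ν] at h; exact_mod_cast h
  have qC : (l : ℝ) < pairing VC ν ∨ l = 2*ν 0 + 2*ν 1 + ν 2 := by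
    rcases lC.lt_or_eq with h | h
    · exact Or.inl h
    · right; rw [pvC ν] at h; exact_mod_cast h
  have qD : (l : ℝ) < pairing VD ν ∨ l = -4*ν 0 - 2*ν 1 + ν 2 := by
    rcases lD.lt_or_eq with h | h
    · exact Or.inl h
    · right; rw [pvD ν] at h; exact_mod_cast h
  -- permuted set equalities
  have permAC : ({VA, VC, VB, VD} : Set (Fin 3 → ℝ)) = {VA, VB, VC, VD} := by
    ext x; simp only [Set.mem_insert_iff, Set.mem_singleton_iff]; tauto
  have permAD : ({VA, VD, VB, VC} : Set (Fin 3 → ℝ)) = {VA, VB, VC, VD} := by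
    ext x; simp only [Set.mem_insert_iff, Set.mem_singleton_iff]; tauto
  have permBC : ({VB, VC, VA, VD} : Set (Fin 3 → ℝ)) = {VA, VB, VC, VD} := by
    ext x; simp only [Set.mem_insert_iff, Set.mem_singleton_iff]; tauto
  have permBD : ({VB, VD, VA, VC} : Set (Fin 3 → ℝ)) = {VA, VB, VC, VD} := by
    ext x; simp only [Set.mem_insert_iff, Set.mem_singleton_iff]; tauto
  have permCD : ({VC, VD, VA, VB} : Set (Fin 3 → ℝ)) = {VA, VB, VC, VD} := by
    ext x; simp only [Set.mem_insert_iff, Set.mem_singleton_iff]; tauto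
  rcases qA with sA | eA <;> rcases qB with sB | eB <;> rcases qC with sC | eC <;>
    rcases qD with sD | eD
  -- 1 (s,s,s,s)
  · exact (contra VA VB VC VD rfl sA sB).elim
  -- 2 (s,s,s,e)
  · exact (contra VA VB VC VD rfl sA sB).elim
  -- 3 (s,s,e,s)
  · exact (contra VA VB VC VD rfl sA sB).elim
  -- 4 (s,s,e,e)
  · exact (contra VA VB VC VD rfl sA sB).elim
  -- 5 (s,e,s,s)
  · exact (contra VA VC VB VD permAC sA sC).elim
  -- 6 (s,e,s,e)
  · exact (contra VA VC VB VD permAC sA sC).elim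
  -- 7 (s,e,e,s)
  · exact (contra VA VD VB VC permAD sA sD).elim
  -- 8 (s,e,e,e) : facet {B,C,D}, ν = (0,0,-1), l = -1
  · have sA' : l < 2*ν 0 + ν 1 - 2*ν 2 := by rw [pvA ν] at sA; exact_mod_cast sA
    have h1 : ν 1 = 0 := by omega
    have h0 : ν 0 = 0 := by omega
    have hdvd : ν 2 ∣ Finset.univ.gcd ν := by
      refine Finset.dvd_gcd fun i _ => ?_
      fin_cases i
      · exact show ν 2 ∣ ν 0 from ⟨0, by omega⟩
      · exact show ν 2 ∣ ν 1 from ⟨0, by omega⟩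
      · exact show ν 2 ∣ ν 2 from dvd_rfl
    rw [hp] at hdvd
    have hunit := Int.isUnit_iff.mp (isUnit_of_dvd_one hdvd)
    have hfin : ν 2 = -1 ∧ l = -1 := by rcases hunit with h | h <;> omega
    constructor
    · intro heq
      exfalso
      have hmem : VD ∈ Δa ∩ { x | pairing x ν = (l : ℝ) } := by
        refine ⟨hVD, ?_⟩
        show pairing VD ν = (l : ℝ)
        rw [pvD ν]; push_cast [eD]; ring
      rw [heq] at hmem
      have := hmem.2
      simp only [Set.mem_setOf_eq, VD] at this
      norm_num at this
    · intro _; omega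
  -- 9 (e,s,s,s)
  · exact (contra VB VC VA VD permBC sB sC).elim
  -- 10 (e,s,s,e)
  · exact (contra VB VC VA VD permBC sB sC).elim
  -- 11 (e,s,e,s)
  · exact (contra VB VD VA VC permBD sB sD).elim
  -- 12 (e,s,e,e) : facet {A,C,D}, ν = (2,-3,1), l = -1
  · have sB' : l < 2*ν 0 + ν 2 := by rw [pvB ν] at sB; exact_mod_cast sB
    have h1 : ν 1 = -3*ν 2 := by omega
    have h0 : ν 0 = 2*ν 2 := by omega
    have hdvd : ν 2 ∣ Finset.univ.gcd ν := by
      refine Finset.dvd_gcd fun i _ => ?_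
      fin_cases i
      · exact show ν 2 ∣ ν 0 from ⟨2, by omega⟩
      · exact show ν 2 ∣ ν 1 from ⟨-3, by omega⟩
      · exact show ν 2 ∣ ν 2 from dvd_rfl
    rw [hp] at hdvd
    have hunit := Int.isUnit_iff.mp (isUnit_of_dvd_one hdvd)
    have hfin : ν 2 = 1 ∧ l = -1 := by rcases hunit with h | h <;> omega
    constructor
    · intro heq
      exfalso
      have hmem : VD ∈ Δa ∩ { x | pairing x ν = (l : ℝ) } := by
        refine ⟨hVD, ?_⟩
        show pairing VD ν = (l : ℝ)
        rw [pvD ν]; push_cast [eD]; ring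
      rw [heq] at hmem
      have := hmem.2
      simp only [Set.mem_setOf_eq, VD] at this
      norm_num at this
    · intro _; omega
  -- 13 (e,e,s,s)
  · exact (contra VC VD VA VB permCD sC sD).elim
  -- 14 (e,e,s,e) : facet {A,B,D}, ν = (-1,3,1), l = -1
  · have sC' : l < 2*ν 0 + 2*ν 1 + ν 2 := by rw [pvC ν] at sC; exact_mod_cast sC
    have h1 : ν 1 = 3*ν 2 := by omega
    have h0 : ν 0 = -ν 2 := by omega
    have hdvd : ν 2 ∣ Finset.univ.gcd ν := by
      refine Finset.dvd_gcd fun i _ => ?_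
      fin_cases i
      · exact show ν 2 ∣ ν 0 from ⟨-1, by omega⟩
      · exact show ν 2 ∣ ν 1 from ⟨3, by omega⟩
      · exact show ν 2 ∣ ν 2 from dvd_rfl
    rw [hp] at hdvd
    have hunit := Int.isUnit_iff.mp (isUnit_of_dvd_one hdvd)
    have hfin : ν 2 = 1 ∧ l = -1 := by rcases hunit with h | h <;> omega
    constructor
    · intro heq
      exfalso
      have hmem : VD ∈ Δa ∩ { x | pairing x ν = (l : ℝ) } := by
        refine ⟨hVD, ?_⟩
        show pairing VD ν = (l : ℝ)
        rw [pvD ν]; push_cast [eD]; ring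
      rw [heq] at hmem
      have := hmem.2
      simp only [Set.mem_setOf_eq, VD] at this
      norm_num at this
    · intro _; omega
  -- 15 (e,e,e,s) : the facet Δcan, ν = (-1,0,0), l = -2
  · have sD' : l < -4*ν 0 - 2*ν 1 + ν 2 := by rw [pvD ν] at sD; exact_mod_cast sD
    have h1 : ν 1 = 0 := by omega
    have h2 : ν 2 = 0 := by omega
    have hdvd : ν 0 ∣ Finset.univ.gcd ν := by
      refine Finset.dvd_gcd fun i _ => ?_
      fin_cases i
      · exact show ν 0 ∣ ν 0 from dvd_rfl
      · exact show ν 0 ∣ ν 1 from ⟨0, by omega⟩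
      · exact show ν 0 ∣ ν 2 from ⟨0, by omega⟩
    rw [hp] at hdvd
    have hunit := Int.isUnit_iff.mp (isUnit_of_dvd_one hdvd)
    have hfin : ν 0 = -1 ∧ l = -2 := by rcases hunit with h | h <;> omega
    have hpair : ∀ x : Fin 3 → ℝ, pairing x ν = -(x 0) := by
      intro x
      simp only [pairing, Fin.sum_univ_three, h1, h2, hfin.1]
      push_cast; ring
    have hset : Δa ∩ { x | pairing x ν = (l : ℝ) } = Δcan := by
      ext x
      simp only [Δcan, Set.mem_inter_iff, Set.mem_setOf_eq, hpair x]
      have hl : (l : ℝ) = -2 := by rw [hfin.2]; norm_num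
      rw [hl]
      constructor
      · rintro ⟨h, h'⟩; exact ⟨h, by linarith⟩
      · rintro ⟨h, h'⟩; exact ⟨h, by linarith⟩
    constructor
    · intro _; omega
    · intro hne; exact (hne hset).elim
  -- 16 (e,e,e,e) : impossible, ν = 0
  · have h1 : ν 1 = 0 := by omega
    have h2 : ν 2 = 0 := by omega
    have h0 : ν 0 = 0 := by omega
    have hdvd : (0 : ℤ) ∣ Finset.univ.gcd ν := by
      refine Finset.dvd_gcd fun i _ => ?_
      fin_cases i
      · exact show (0:ℤ) ∣ ν 0 from ⟨0, by omega⟩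
      · exact show (0:ℤ) ∣ ν 1 from ⟨0, by omega⟩
      · exact show (0:ℤ) ∣ ν 2 from ⟨0, by omega⟩
    rw [hp] at hdvd
    norm_num at hdvd

/-! ### Part 1: interior lattice points of `Δcan` -/

lemma intrinsic_eq_interior {E : Type*} [NormedAddCommGroup E] [NormedSpace ℝ E]
    {S : Set E} (h : affineSpan ℝ S = ⊤) : intrinsicInterior ℝ S = interior S := by
  refine subset_antisymm ?_ interior_subset_intrinsicInterior
  rintro x hx
  rw [mem_intrinsicInterior] at hx
  obtain ⟨y, hy, rfl⟩ := hx
  have hopen : IsOpen ((affineSpan ℝ S : Set E)) := by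
    rw [h]; simp only [AffineSubspace.top_coe]; exact isOpen_univ
  have hmap : IsOpenMap ((↑) : (affineSpan ℝ S : Set E) → E) :=
    hopen.isOpenEmbedding_subtypeVal.isOpenMap
  have h1 : (↑y : E) ∈ interior (((↑) : (affineSpan ℝ S : Set E) → E) '' ((↑) ⁻¹' S)) :=
    hmap.image_interior_subset _ ⟨y, hy, rfl⟩
  exact interior_mono (Set.image_preimage_subset _ _) h1

def philin : (Fin 2 → ℝ) →ₗ[ℝ] (Fin 3 → ℝ) where
  toFun p := ![0, p 0, p 1]
  map_add' p q := by funext i; fin_cases i <;> simp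
  map_smul' c p := by funext i; fin_cases i <;> simp

def phiaff : (Fin 2 → ℝ) →ᵃ[ℝ] (Fin 3 → ℝ) where
  toFun p := ![2, p 0, p 1]
  linear := philin
  map_vadd' p v := by
    funext i
    simp only [philin, LinearMap.coe_mk, AddHom.coe_mk]
    fin_cases i <;> simp

def phi : (Fin 2 → ℝ) →ᵃⁱ[ℝ] (Fin 3 → ℝ) where
  toAffineMap := phiaff
  norm_map p := by
    show ‖![(0:ℝ), p 0, p 1]‖ = ‖p‖
    refine le_antisymm ?_ ?_
    · refine (pi_norm_le_iff_of_nonneg (norm_nonneg p)).2 fun i => ?_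
      fin_cases i
      · simp
      · simpa using norm_le_pi_norm p 0
      · simpa using norm_le_pi_norm p 1
    · refine (pi_norm_le_iff_of_nonneg (norm_nonneg _)).2 fun i => ?_
      fin_cases i
      · simpa using norm_le_pi_norm ![(0:ℝ), p 0, p 1] 1
      · simpa using norm_le_pi_norm ![(0:ℝ), p 0, p 1] 2

def Ttri : Set (Fin 2 → ℝ) := convexHull ℝ {![1, -2], ![0, 1], ![2, 1]}

def f2 : (Fin 2 → ℝ) →L[ℝ] ℝ :=
  (3 : ℝ) • ContinuousLinearMap.proj 0 + ContinuousLinearMap.proj 1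

def f3 : (Fin 2 → ℝ) →L[ℝ] ℝ :=
  (3 : ℝ) • ContinuousLinearMap.proj 0 - ContinuousLinearMap.proj 1

lemma f2_apply (p : Fin 2 → ℝ) : f2 p = 3 * p 0 + p 1 := by
  simp [f2, ContinuousLinearMap.proj]

lemma f3_apply (p : Fin 2 → ℝ) : f3 p = 3 * p 0 - p 1 := by
  simp [f3, ContinuousLinearMap.proj]

lemma f2_surj : Function.Surjective f2 := by
  intro t; exact ⟨![t/3, 0], by rw [f2_apply]; simp; ring⟩

lemma f3_surj : Function.Surjective f3 := by
  intro t; exact ⟨![t/3, 0], by rw [f3_apply]; simp; ring⟩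

lemma proj1_surj : Function.Surjective (ContinuousLinearMap.proj (R := ℝ)
    (φ := fun _ : Fin 2 => ℝ) 1) := by
  intro t; exact ⟨![0, t], by simp [ContinuousLinearMap.proj]⟩

lemma interior_H1 : interior {p : Fin 2 → ℝ | p 1 ≤ 1} = {p | p 1 < 1} := by
  have h : {p : Fin 2 → ℝ | p 1 ≤ 1} =
      (ContinuousLinearMap.proj (R := ℝ) (φ := fun _ : Fin 2 => ℝ) 1) ⁻¹' (Set.Iic 1) := rfl
  rw [h, ContinuousLinearMap.interior_preimage _ proj1_surj, interior_Iic]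
  rfl

lemma interior_H2 : interior {p : Fin 2 → ℝ | 1 ≤ 3 * p 0 + p 1} = {p | 1 < 3 * p 0 + p 1} := by
  have h : {p : Fin 2 → ℝ | 1 ≤ 3 * p 0 + p 1} = f2 ⁻¹' (Set.Ici 1) := by
    ext p; simp [f2_apply]
  have h' : {p : Fin 2 → ℝ | 1 < 3 * p 0 + p 1} = f2 ⁻¹' (Set.Ioi 1) := by
    ext p; simp [f2_apply]
  rw [h, h', ContinuousLinearMap.interior_preimage _ f2_surj, interior_Ici]

lemma interior_H3 : interior {p : Fin 2 → ℝ | 3 * p 0 - p 1 ≤ 5} = {p | 3 * p 0 - p 1 < 5} := by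
  have h : {p : Fin 2 → ℝ | 3 * p 0 - p 1 ≤ 5} = f3 ⁻¹' (Set.Iic 5) := by
    ext p; simp [f3_apply]
  have h' : {p : Fin 2 → ℝ | 3 * p 0 - p 1 < 5} = f3 ⁻¹' (Set.Iio 5) := by
    ext p; simp [f3_apply]
  rw [h, h', ContinuousLinearMap.interior_preimage _ f3_surj, interior_Iic]

lemma Ttri_eq : Ttri = {p : Fin 2 → ℝ | p 1 ≤ 1} ∩ {p | 1 ≤ 3 * p 0 + p 1} ∩
    {p | 3 * p 0 - p 1 ≤ 5} := by
  apply subset_antisymm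
  · apply convexHull_min
    · rintro x (rfl | rfl | rfl) <;>
        refine ⟨⟨?_, ?_⟩, ?_⟩ <;> simp <;> norm_num
    · refine Convex.inter (Convex.inter ?_ ?_) ?_
      · exact convex_halfSpace_le ⟨fun _ _ => rfl, fun _ _ => rfl⟩ 1
      · exact convex_halfSpace_ge ⟨by intro a b; simp; ring, by intro a b; simp; ring⟩ 1
      · exact convex_halfSpace_le ⟨by intro a b; simp; ring, by intro a b; simp; ring⟩ 5
  · rintro p ⟨⟨h1, h2⟩, h3⟩
    simp only [Set.mem_setOf_eq] at h1 h2 h3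
    refine hull3_mk ![(1 - p 1)/3, (5 + p 1 - 3 * p 0)/6, (3 * p 0 + p 1 - 1)/6] ?_ ?_ ?_
    · intro i; fin_cases i <;> simp <;> linarith
    · simp; ring
    · funext i; fin_cases i <;> simp <;> ring

lemma Ttri_span : affineSpan ℝ Ttri = ⊤ := by
  have h1 : affineSpan ℝ ({![1, -2], ![0, 1], ![2, 1]} : Set (Fin 2 → ℝ)) = ⊤ := by
    rw [AffineSubspace.affineSpan_eq_top_iff_vectorSpan_eq_top_of_nonempty ℝ _ _
      ⟨![1,-2], by simp⟩]
    rw [Submodule.eq_top_iff']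
    intro x
    have ha : (![0, 1] - ![1, -2] : Fin 2 → ℝ) ∈
        vectorSpan ℝ ({![1, -2], ![0, 1], ![2, 1]} : Set (Fin 2 → ℝ)) :=
      vsub_mem_vectorSpan ℝ (by simp) (by simp)
    have hb : (![2, 1] - ![1, -2] : Fin 2 → ℝ) ∈
        vectorSpan ℝ ({![1, -2], ![0, 1], ![2, 1]} : Set (Fin 2 → ℝ)) :=
      vsub_mem_vectorSpan ℝ (by simp) (by simp)
    have hx : x = ((x 1/3 - x 0)/2) • (![0, 1] - ![1, -2] : Fin 2 → ℝ) +
        ((x 1/3 + x 0)/2) • (![2, 1] - ![1, -2] : Fin 2 → ℝ) := by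
      funext i; fin_cases i <;> simp <;> ring
    rw [hx]
    exact Submodule.add_mem _ (Submodule.smul_mem _ _ ha) (Submodule.smul_mem _ _ hb)
  have h2 : affineSpan ℝ ({![1, -2], ![0, 1], ![2, 1]} : Set (Fin 2 → ℝ)) ≤ affineSpan ℝ Ttri :=
    affineSpan_mono ℝ (subset_convexHull ℝ _)
  rw [h1] at h2
  exact top_le_iff.mp h2

lemma Δcan_hull : Δcan = convexHull ℝ ({VA, VB, VC} : Set (Fin 3 → ℝ)) := by
  apply subset_antisymm
  · rintro x ⟨hxa, hx0⟩
    have hx0' : x 0 = 2 := hx0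
    have hxa' : x ∈ convexHull ℝ ({VA, VB, VC, VD} : Set (Fin 3 → ℝ)) := hxa
    obtain ⟨W, hW0, hW1, hW2⟩ := hull4_weights hxa'
    have hc : W 0 * 2 + W 1 * 2 + W 2 * 2 + W 3 * (-4) = 2 := by
      have h := congrFun hW2 0
      simp only [Pi.add_apply, Pi.smul_apply, smul_eq_mul, VA, VB, VC, VD,
        Matrix.cons_val_zero] at h
      rw [hx0'] at h
      exact h
    have h3 : W 3 = 0 := by linarith
    refine hull3_mk ![W 0, W 1, W 2] (by intro i; fin_cases i <;> simp [hW0 0, hW0 1, hW0 2])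
      ?_ ?_
    · simp; linarith
    · simp only [Matrix.cons_val_zero, Matrix.cons_val_one, Matrix.head_cons]
      rw [← hW2, h3]; simp
  · refine Set.subset_inter ?_ ?_
    · have hmono : ({VA, VB, VC} : Set (Fin 3 → ℝ)) ⊆ {VA, VB, VC, VD} := by
        intro x hx; simp only [Set.mem_insert_iff, Set.mem_singleton_iff] at hx ⊢; tauto
      exact convexHull_mono hmono
    · apply convexHull_min
      · rintro x (rfl | rfl | rfl) <;> simp [VA, VB, VC]
      · exact convex_hyperplane ⟨fun _ _ => rfl, fun _ _ => rfl⟩ 2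

lemma phi_image_Ttri : ⇑phi '' Ttri = convexHull ℝ ({VA, VB, VC} : Set (Fin 3 → ℝ)) := by
  have hcoe : ⇑phi = ⇑phiaff := rfl
  rw [hcoe]
  show ⇑phiaff '' convexHull ℝ {![1, -2], ![0, 1], ![2, 1]} = _
  rw [AffineMap.image_convexHull]
  congr 1
  rw [Set.image_insert_eq, Set.image_insert_eq, Set.image_singleton]
  have e1 : phiaff ![1, -2] = VA := by funext i; fin_cases i <;> rfl
  have e2 : phiaff ![0, 1] = VB := by funext i; fin_cases i <;> rfl
  have e3 : phiaff ![2, 1] = VC := by funext i; fin_cases i <;> rfl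
  rw [e1, e2, e3]

lemma part1 : { m : Fin 3 → ℝ | IsLatticePoint m ∧ m ∈ intrinsicInterior ℝ Δcan }.ncard = 2 := by
  have hint : intrinsicInterior ℝ Δcan = ⇑phi '' interior Ttri := by
    rw [Δcan_hull, ← phi_image_Ttri, AffineIsometry.image_intrinsicInterior,
      intrinsic_eq_interior Ttri_span]
  have hS0 : interior Ttri = {p : Fin 2 → ℝ | p 1 < 1} ∩ {p | 1 < 3 * p 0 + p 1} ∩
      {p | 3 * p 0 - p 1 < 5} := by
    rw [Ttri_eq, interior_inter, interior_inter, interior_H1, interior_H2, interior_H3]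
  have hset : { m : Fin 3 → ℝ | IsLatticePoint m ∧ m ∈ intrinsicInterior ℝ Δcan } =
      {![2, 1, 0], ![(2:ℝ), 1, -1]} := by
    rw [hint, hS0]
    ext m
    simp only [Set.mem_setOf_eq, Set.mem_image, Set.mem_inter_iff, Set.mem_insert_iff,
      Set.mem_singleton_iff]
    constructor
    · rintro ⟨hlat, p, ⟨⟨hp1, hp2⟩, hp3⟩, hpm⟩
      obtain ⟨z1, hz1⟩ := hlat 1
      obtain ⟨z2, hz2⟩ := hlat 2
      have hm0 : m 0 = 2 := by rw [← hpm]; rfl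
      have hm1 : m 1 = p 0 := by rw [← hpm]; rfl
      have hm2 : m 2 = p 1 := by rw [← hpm]; rfl
      have i1 : (z2 : ℝ) < 1 := by rw [← hz2, hm2]; exact hp1
      have i2 : (1 : ℝ) < 3 * z1 + z2 := by rw [← hz1, ← hz2, hm1, hm2]; exact hp2
      have i3 : 3 * (z1 : ℝ) - z2 < 5 := by rw [← hz1, ← hz2, hm1, hm2]; exact hp3
      have j1 : z2 < 1 := by exact_mod_cast i1
      have j2 : 1 < 3 * z1 + z2 := by exact_mod_cast i2
      have j3 : 3 * z1 - z2 < 5 := by exact_mod_cast i3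
      have hz : z1 = 1 ∧ (z2 = 0 ∨ z2 = -1) := by omega
      rcases hz.2 with h | h
      · left
        funext i; fin_cases i
        · show m 0 = (2:ℝ); rw [hm0]
        · show m 1 = (1:ℝ); rw [hz1, hz.1]; norm_num
        · show m 2 = (0:ℝ); rw [hz2, h]; norm_num
      · right
        funext i; fin_cases i
        · show m 0 = (2:ℝ); rw [hm0]
        · show m 1 = (1:ℝ); rw [hz1, hz.1]; norm_num
        · show m 2 = (-1:ℝ); rw [hz2, h]; norm_num
    · rintro (rfl | rfl)
      · refine ⟨?_, ![1, 0], ⟨⟨?_, ?_⟩, ?_⟩, ?_⟩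
        · intro i; fin_cases i
          · exact ⟨2, by norm_num⟩
          · exact ⟨1, by norm_num⟩
          · exact ⟨0, by norm_num⟩
        · show (![1, (0:ℝ)] 1) < 1; norm_num
        · show (1:ℝ) < 3 * ![1, (0:ℝ)] 0 + ![1, (0:ℝ)] 1; norm_num
        · show 3 * ![1, (0:ℝ)] 0 - ![1, (0:ℝ)] 1 < 5; norm_num
        · funext i; fin_cases i <;> rfl
      · refine ⟨?_, ![1, -1], ⟨⟨?_, ?_⟩, ?_⟩, ?_⟩
        · intro i; fin_cases i
          · exact ⟨2, by norm_num⟩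
          · exact ⟨1, by norm_num⟩
          · exact ⟨-1, by norm_num⟩
        · show (![1, (-1:ℝ)] 1) < 1; norm_num
        · show (1:ℝ) < 3 * ![1, (-1:ℝ)] 0 + ![1, (-1:ℝ)] 1; norm_num
        · show 3 * ![1, (-1:ℝ)] 0 - ![1, (-1:ℝ)] 1 < 5; norm_num
        · funext i; fin_cases i <;> rfl
  rw [hset]
  refine Set.ncard_pair ?_
  intro h
  have : (0:ℝ) = -1 := congrFun h 2
  norm_num at this

/-! ### Main theorem -/

/-- For `Δ = conv{(2,1,−2), (2,0,1), (2,2,1), (−4,−2,1)}`, the facet `Δ_can`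
in the plane `{x₁ = 2}` has exactly `2` interior lattice points (relative to
that facet), and all other facets of `Δ` have integral distance `1` to the
origin while `Δ_can` has integral distance `2`. -/
theorem classA_max_facet_distances :
    { m : Fin 3 → ℝ | IsLatticePoint m ∧ m ∈ intrinsicInterior ℝ Δcan }.ncard = 2 ∧
    ∀ (n : Fin 3 → ℤ) (l : ℤ), IsPrimitiveZ n → IsFacetData Δa n l →
      ((Δa ∩ { x | pairing x n = (l : ℝ) } = Δcan → l.natAbs = 2) ∧
       (Δa ∩ { x | pairing x n = (l : ℝ) } ≠ Δcan → l.natAbs = 1)) :=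
  ⟨part1, fun n l hp hf => part2 n l hp hf⟩
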